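/- Let K be a field of prime characteristic p, and let V_1 ⊆ V_2 be finite additive subgroups of K with |V_2| = p·|V_1|. Write f_{V_1}(X) = ∏_{a ∈ V_1}(X − a) and f_{V_2}(X) = ∏_{a ∈ V_2}(X − a), and assume the map x ↦ f_{V_1}(x) is an additive group homomorphism of K. Then for any a ∈ V_2 \ V_1, setting c = f_{V_1}(a), one has f_{V_2}(x) = f_{V_1}(x)^p − c^(p−1)·f_{V_1}(x) for all x ∈ K; in particular x ↦ f_{V_2}(x) is also an additive group homomorphism of K. -/

import Mathlib

open Finset Polynomial

private lemma zmod_prod (p : ℕ) [Fact p.Prime] (K : Type*) [Field K] [CharP K p] (t : K) :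
    ∏ z : ZMod p, (t - ZMod.cast z) = t ^ p - t := by
  have hp : p.Prime := Fact.out
  have hroots : (X ^ p - X : (ZMod p)[X]).roots = Finset.univ.val := by
    have := FiniteField.roots_X_pow_card_sub_X (ZMod p)
    rwa [ZMod.card p] at this
  have hmonic : (X ^ p - X : (ZMod p)[X]).Monic := by
    apply (monic_X_pow p).sub_of_left
    rw [degree_X_pow, degree_X]
    exact_mod_cast hp.one_lt
  have hdeg : (X ^ p - X : (ZMod p)[X]).natDegree = p :=
    FiniteField.X_pow_card_sub_X_natDegree_eq (ZMod p) hp.one_lt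
  have hprod := Polynomial.prod_multiset_X_sub_C_of_monic_of_roots_card_eq hmonic
    (by rw [hroots, hdeg]; simp [ZMod.card])
  rw [hroots] at hprod
  have hprod2 : ∏ a : ZMod p, (X - C a) = (X ^ p - X : (ZMod p)[X]) := hprod
  have := congrArg (fun q => Polynomial.eval t (q.map (ZMod.castHom (dvd_refl p) K))) hprod2
  simpa [Polynomial.map_prod, eval_prod, Polynomial.map_sub, Polynomial.map_pow] using this

private lemma lin_prod (p : ℕ) [Fact p.Prime] (K : Type*) [Field K] [CharP K p]
    (c : K) (hc : c ≠ 0) (y : K) :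
    ∏ i ∈ Finset.range p, (y - (i : K) * c) = y ^ p - c ^ (p - 1) * y := by
  have hp : p.Prime := Fact.out
  have h1 : ∏ i ∈ Finset.range p, (y - (i : K) * c) = ∏ z : ZMod p, (y - (ZMod.cast z : K) * c) := by
    refine Finset.prod_nbij' (fun i => (i : ZMod p)) (fun z => z.val) ?_ ?_ ?_ ?_ ?_
    · intro i hi; exact Finset.mem_univ _
    · intro z hz; simpa using z.val_lt
    · intro i hi; simp at hi; exact ZMod.val_natCast_of_lt hi
    · intro z hz; exact ZMod.natCast_rightInverse z
    · intro i hi; simp at hi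
      have hcast : (ZMod.cast ((i : ZMod p)) : K) = (i : K) := by
        exact ZMod.cast_natCast (dvd_refl p) i
      rw [hcast]
  rw [h1]
  have key := zmod_prod p K (y * c⁻¹)
  have h3 : c * (y * c⁻¹) = y := by field_simp
  have hcp : c ^ p = c ^ (p - 1) * c := by
    have h1p : 1 ≤ p := hp.one_le
    rw [← pow_succ]; congr 1; omega
  calc ∏ z : ZMod p, (y - (ZMod.cast z : K) * c)
      = ∏ z : ZMod p, (c * (y * c⁻¹ - ZMod.cast z)) := by
        refine Finset.prod_congr rfl fun z _ => ?_
        rw [mul_sub, h3]; ring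
    _ = (∏ _z : ZMod p, c) * ∏ z : ZMod p, (y * c⁻¹ - ZMod.cast z) := Finset.prod_mul_distrib
    _ = c ^ p * ((y * c⁻¹) ^ p - y * c⁻¹) := by
        rw [Finset.prod_const, Finset.card_univ, ZMod.card, key]
    _ = y ^ p - c ^ (p - 1) * y := by
        rw [mul_sub, ← mul_pow, h3, hcp, mul_assoc, h3]



/-- Let `K` be a field of prime characteristic `p`, and `V₁ ⊆ V₂` finite
additive subgroups of `K` with `|V₂| = p·|V₁|`.  If `f_{V₁}(x) = ∏_{a ∈ V₁} (x - a)` is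
additive, then for any `a ∈ V₂ \ V₁`, setting `c = f_{V₁}(a)`, one has
`f_{V₂}(x) = f_{V₁}(x)^p - c^(p-1)·f_{V₁}(x)` for all `x`; in particular `f_{V₂}` is also
additive. -/
theorem stmt_6 (p : ℕ) (hp : p.Prime) (K : Type*) [Field K] [CharP K p]
    (V₁ V₂ : AddSubgroup K) (hV₁ : (V₁ : Set K).Finite) (hV₂ : (V₂ : Set K).Finite)
    (hle : V₁ ≤ V₂) (hcard : Nat.card V₂ = p * Nat.card V₁)
    (hadd : ∀ x y : K, (∏ a ∈ hV₁.toFinset, (x + y - a)) =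
      (∏ a ∈ hV₁.toFinset, (x - a)) + (∏ a ∈ hV₁.toFinset, (y - a))) :
    ∀ a : K, a ∈ V₂ → a ∉ V₁ →
      ((∀ x : K, (∏ b ∈ hV₂.toFinset, (x - b)) =
          (∏ b ∈ hV₁.toFinset, (x - b)) ^ p -
            (∏ b ∈ hV₁.toFinset, (a - b)) ^ (p - 1) * (∏ b ∈ hV₁.toFinset, (x - b))) ∧
        (∀ x y : K, (∏ b ∈ hV₂.toFinset, (x + y - b)) =
          (∏ b ∈ hV₂.toFinset, (x - b)) + (∏ b ∈ hV₂.toFinset, (y - b)))) := by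
  intro a haV₂ haV₁
  haveI : Fact p.Prime := ⟨hp⟩
  classical
  set f : K → K := fun x => ∏ b ∈ hV₁.toFinset, (x - b) with hfdef
  -- f 0 = 0
  have h0 : f 0 = 0 := by
    have h := hadd 0 0
    rw [add_zero] at h
    exact left_eq_add.mp h
  let φ : K →+ K := { toFun := f, map_zero' := h0, map_add' := hadd }
  have hφ : ∀ x, φ x = f x := fun _ => rfl
  -- roots of f
  have hroot0 : ∀ x : K, x ∈ V₁ → f x = 0 := by
    intro x hx
    exact Finset.prod_eq_zero (hV₁.mem_toFinset.mpr hx) (sub_self x)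
  have hroot : ∀ x : K, f x = 0 → x ∈ V₁ := by
    intro x hx
    rcases Finset.prod_eq_zero_iff.mp hx with ⟨b, hb, hxb⟩
    have hxb' : x = b := sub_eq_zero.mp hxb
    exact hxb' ▸ hV₁.mem_toFinset.mp hb
  set c : K := f a with hcdef
  have hc : c ≠ 0 := fun h => haV₁ (hroot a h)
  -- nat multiples stay in subgroups
  have hnm : ∀ (W : AddSubgroup K) (n : ℕ) (x : K), x ∈ W → (n : K) * x ∈ W := by
    intro W n x hx
    have := W.nsmul_mem hx n
    rwa [nsmul_eq_mul] at this
  -- the embedding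
  set e : ℕ × K → K := fun q => q.2 + (q.1 : K) * a with hedef
  have hinj : ∀ q₁ ∈ Finset.range p ×ˢ hV₁.toFinset, ∀ q₂ ∈ Finset.range p ×ˢ hV₁.toFinset,
      e q₁ = e q₂ → q₁ = q₂ := by
    rintro ⟨i, v⟩ h1 ⟨j, w⟩ h2 heq
    simp only [Finset.mem_product, Finset.mem_range, Set.Finite.mem_toFinset] at h1 h2
    obtain ⟨hi, hv⟩ := h1; obtain ⟨hj, hw⟩ := h2
    have hij : i = j := by
      by_contra hne
      have hd : ((i : ZMod p) - j) ≠ 0 := by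
        intro h
        apply hne
        have : (i : ZMod p) = j := by rwa [sub_eq_zero] at h
        have := congrArg ZMod.val this
        rwa [ZMod.val_natCast_of_lt hi, ZMod.val_natCast_of_lt hj] at this
      set ψ := ZMod.castHom (dvd_refl p) K with hψ
      set d : ZMod p := (i : ZMod p) - j with hddef
      have hmemV : ψ d * a ∈ V₁ := by
        have : ((i : K) - j) * a = w - v := by
          have : v + (i : K) * a = w + (j : K) * a := heq
          ring_nf
          ring_nf at this
          linear_combination this
        have h2 : ψ d = (i : K) - j := by
          rw [hddef, map_sub, map_natCast, map_natCast]
        rw [h2, this]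
        exact sub_mem hw hv
      set m : ℕ := (d⁻¹ : ZMod p).val with hmdef
      have hma : a ∈ V₁ := by
        have key : (m : K) * (ψ d * a) = a := by
          have h1 : (m : K) = ψ (d⁻¹) := by
            rw [hmdef, ← map_natCast ψ, ZMod.natCast_rightInverse]
          rw [← mul_assoc, h1, ← map_mul, inv_mul_cancel₀ hd, map_one, one_mul]
        rw [← key]
        exact hnm V₁ m _ hmemV
      exact haV₁ hma
    subst hij
    have : v = w := by
      have : v + (i : K) * a = w + (i : K) * a := heq
      exact add_right_cancel this
    simp [this]
  -- cardinalities
  have hc1 : Nat.card V₁ = hV₁.toFinset.card := by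
    rw [← SetLike.coe_sort_coe, Nat.card_coe_set_eq, Set.ncard_eq_toFinset_card _ hV₁]
  have hc2 : Nat.card V₂ = hV₂.toFinset.card := by
    rw [← SetLike.coe_sort_coe, Nat.card_coe_set_eq, Set.ncard_eq_toFinset_card _ hV₂]
  -- image equals F₂
  have hsub : (Finset.range p ×ˢ hV₁.toFinset).image e ⊆ hV₂.toFinset := by
    intro x hx
    rcases Finset.mem_image.mp hx with ⟨⟨i, v⟩, hq, rfl⟩
    simp only [Finset.mem_product, Finset.mem_range, Set.Finite.mem_toFinset] at hq
    rw [Set.Finite.mem_toFinset]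
    exact add_mem (hle hq.2) (hnm V₂ i a haV₂)
  have himgcard : ((Finset.range p ×ˢ hV₁.toFinset).image e).card = hV₂.toFinset.card := by
    rw [Finset.card_image_of_injOn hinj, Finset.card_product, Finset.card_range,
      ← hc2, hcard, hc1]
  have himg : (Finset.range p ×ˢ hV₁.toFinset).image e = hV₂.toFinset :=
    Finset.eq_of_subset_of_card_le hsub (le_of_eq himgcard.symm)
  -- main formula
  have hmain : ∀ x : K, (∏ b ∈ hV₂.toFinset, (x - b)) = f x ^ p - c ^ (p - 1) * f x := by
    intro x
    have step1 : (∏ b ∈ hV₂.toFinset, (x - b)) =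
        ∏ q ∈ Finset.range p ×ˢ hV₁.toFinset, (x - e q) := by
      rw [← himg, Finset.prod_image hinj]
    have step2 : (∏ q ∈ Finset.range p ×ˢ hV₁.toFinset, (x - e q)) =
        ∏ i ∈ Finset.range p, ∏ v ∈ hV₁.toFinset, (x - (v + (i : K) * a)) := by
      rw [Finset.prod_product]
    have step3 : ∀ i : ℕ, (∏ v ∈ hV₁.toFinset, (x - (v + (i : K) * a))) =
        f x - (i : K) * c := by
      intro i
      have e1 : (∏ v ∈ hV₁.toFinset, (x - (v + (i : K) * a))) = f (x - (i : K) * a) := by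
        refine Finset.prod_congr rfl fun v _ => by ring
      have e2 : f (x - (i : K) * a) = f x - (i : K) * f a := by
        have h3 : (i : K) * a = i • a := (nsmul_eq_mul i a).symm
        calc f (x - (i : K) * a) = φ (x - i • a) := by rw [← h3, hφ]
          _ = φ x - i • φ a := by rw [map_sub, map_nsmul]
          _ = f x - (i : K) * f a := by rw [hφ, hφ, nsmul_eq_mul]
      rw [e1, e2]
    rw [step1, step2, Finset.prod_congr rfl fun i _ => step3 i]
    exact lin_prod p K c hc (f x)
  refine ⟨hmain, fun x y => ?_⟩
  rw [hmain (x + y), hmain x, hmain y]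
  have hfxy : f (x + y) = f x + f y := hadd x y
  rw [hfxy, add_pow_char]
  ring
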